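/- The Minkowski sum of trapezoids satisfies T^{k_1}_{[m_1,n_1]} + T^{k_2}_{[m_2,n_2]} = T^{k_1+k_2}_{[m_1+m_2, n_1+n_2]}, where the sum of two sets of pairs is the set of coordinatewise sums. More generally, for any finite family, the Minkowski sum of T^{k_i}_{[m_i,n_i]} for i = 1,…,p equals T^{Σk_i}_{[Σm_i, Σn_i]}, provided each m_i ≥ 2k_i and n_i ≥ m_i. -/
import Mathlib


open Matrix Finset Pointwise

noncomputable def posCount {n : Type*} [Fintype n] [DecidableEq n]
    {A : Matrix n n ℝ} (hA : A.IsHermitian) : ℕ :=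
  Nat.card {i // 0 < hA.eigenvalues i}

noncomputable def negCount {n : Type*} [Fintype n] [DecidableEq n]
    {A : Matrix n n ℝ} (hA : A.IsHermitian) : ℕ :=
  Nat.card {i // hA.eigenvalues i < 0}

noncomputable def zeroCount {n : Type*} [Fintype n] [DecidableEq n]
    {A : Matrix n n ℝ} (hA : A.IsHermitian) : ℕ :=
  Nat.card {i // hA.eigenvalues i = 0}

def inS {V : Type*} [Fintype V] [DecidableEq V] (G : SimpleGraph V) (A : Matrix V V ℝ) : Prop :=
  A.IsHermitian ∧ ∀ i j : V, i ≠ j → (A i j ≠ 0 ↔ G.Adj i j)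

noncomputable def inertiaSet {V : Type*} [Fintype V] [DecidableEq V] (G : SimpleGraph V) :
    Set (ℕ × ℕ) :=
  {pq | ∃ A : Matrix V V ℝ, ∃ hA : A.IsHermitian, inS G A ∧ pq = (posCount hA, negCount hA)}

def T (k m n : ℕ) : Set (ℕ × ℕ) :=
  {pq | k ≤ pq.1 ∧ k ≤ pq.2 ∧ m ≤ pq.1 + pq.2 ∧ pq.1 + pq.2 ≤ n}


lemma T_add (k₁ m₁ n₁ k₂ m₂ n₂ : ℕ)
    (h1 : 2 * k₁ ≤ m₁) (h2 : m₁ ≤ n₁) (h3 : 2 * k₂ ≤ m₂) (h4 : m₂ ≤ n₂) :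
    T k₁ m₁ n₁ + T k₂ m₂ n₂ = T (k₁ + k₂) (m₁ + m₂) (n₁ + n₂) := by
  ext ⟨p, q⟩
  simp only [Set.mem_add, T, Set.mem_setOf_eq, Prod.exists, Prod.mk_add_mk, Prod.mk.injEq]
  constructor
  · rintro ⟨p₁, q₁, ⟨a1, a2, a3, a4⟩, p₂, q₂, ⟨b1, b2, b3, b4⟩, rfl, rfl⟩
    exact ⟨by omega, by omega, by omega, by omega⟩
  · rintro ⟨hp, hq, hm, hn⟩
    set s := max m₁ (p + q - n₂) with hs
    set p₁ := max k₁ (s + k₂ - q) with hp1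
    exact ⟨p₁, s - p₁, ⟨by omega, by omega, by omega, by omega⟩,
      p - p₁, q - (s - p₁), ⟨by omega, by omega, by omega, by omega⟩, by omega, by omega⟩


theorem stmt_9 :
    (∀ k₁ m₁ n₁ k₂ m₂ n₂ : ℕ,
      2 * k₁ ≤ m₁ → m₁ ≤ n₁ → 2 * k₂ ≤ m₂ → m₂ ≤ n₂ →
      T k₁ m₁ n₁ + T k₂ m₂ n₂ = T (k₁ + k₂) (m₁ + m₂) (n₁ + n₂)) ∧
    (∀ (p : ℕ) (k m n : Fin p → ℕ),
      (∀ i, 2 * k i ≤ m i) → (∀ i, m i ≤ n i) →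
      ∑ i, T (k i) (m i) (n i) = T (∑ i, k i) (∑ i, m i) (∑ i, n i)) := by
  refine ⟨T_add, ?_⟩
  intro p
  induction p with
  | zero =>
    intro k m n _ _
    simp only [Finset.univ_eq_empty, Finset.sum_empty]
    ext ⟨a, b⟩
    simp [T, Prod.ext_iff]
  | succ p ih =>
    intro k m n hkm hmn
    rw [Fin.sum_univ_succ (f := fun i => T (k i) (m i) (n i)),
      Fin.sum_univ_succ (f := k), Fin.sum_univ_succ (f := m), Fin.sum_univ_succ (f := n),
      ih (fun i => k i.succ) (fun i => m i.succ) (fun i => n i.succ)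
        (fun i => hkm i.succ) (fun i => hmn i.succ)]
    apply T_add _ _ _ _ _ _ (hkm 0) (hmn 0)
    · calc 2 * ∑ i, k (Fin.succ i) = ∑ i, 2 * k (Fin.succ i) := by rw [Finset.mul_sum]
        _ ≤ ∑ i, m (Fin.succ i) := Finset.sum_le_sum fun i _ => hkm i.succ
    · exact Finset.sum_le_sum fun i _ => hmn i.succ
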